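/- A finite set of gambles D = {f₁, …, fₙ} on a finite outcome space Ω avoids sure loss if and only if there exists a probability mass function p on Ω such that for every i, Σ_{ω∈Ω} fᵢ(ω) p(ω) ≥ 0. -/

import Mathlib

theorem avoids_sure_loss_iff_pmf {Ω : Type*} [Fintype Ω] [Nonempty Ω]
    (n : ℕ) (f : Fin n → Ω → ℝ) :
    (∀ lam : Fin n → ℝ, (∀ i, 0 ≤ lam i) →
      ∃ ω : Ω, 0 ≤ ∑ i, lam i * f i ω) ↔
    (∃ p : Ω → ℝ, (∀ ω, 0 ≤ p ω) ∧ (∑ ω, p ω = 1) ∧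
      ∀ i, 0 ≤ ∑ ω, f i ω * p ω) := by
  constructor
  · -- hard direction: separation
    intro hASL
    classical
    set N : Set (Ω → ℝ) := {g | ∀ ω, g ω < 0} with hNdef
    set A : Set (Ω → ℝ) :=
      {g | ∃ lam : Fin n → ℝ, (∀ i, 0 ≤ lam i) ∧ g = fun ω => ∑ i, lam i * f i ω} with hAdef
    have hNpi : N = Set.univ.pi fun _ : Ω => Set.Iio (0:ℝ) := by
      ext g; simp [hNdef, Set.mem_pi]
    have hNopen : IsOpen N := by
      rw [hNpi]; exact isOpen_set_pi Set.finite_univ (fun _ _ => isOpen_Iio)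
    have hNconv : Convex ℝ N := by
      rw [hNpi]; exact convex_pi (fun _ _ => convex_Iio 0)
    have hAconv : Convex ℝ A := by
      rintro g ⟨lg, hlg, rfl⟩ h ⟨lh, hlh, rfl⟩ a b ha hb hab
      refine ⟨fun i => a * lg i + b * lh i, fun i => add_nonneg (mul_nonneg ha (hlg i)) (mul_nonneg hb (hlh i)), ?_⟩
      funext ω
      simp only [Pi.add_apply, Pi.smul_apply, smul_eq_mul, Finset.mul_sum,
        add_mul, ← Finset.sum_add_distrib]
      congr 1; funext i; ring
    have hdisj : Disjoint N A := by
      rw [Set.disjoint_left]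
      rintro g hgN ⟨lam, hlam, rfl⟩
      obtain ⟨ω, hω⟩ := hASL lam hlam
      exact absurd hω (not_le.mpr (hgN ω))
    obtain ⟨F, c, hNle, hAle⟩ := geometric_hahn_banach_open hNconv hNopen hAconv hdisj
    set p : Ω → ℝ := fun ω => F (Pi.single ω 1) with hpdef
    have hF : ∀ g : Ω → ℝ, F g = ∑ ω, g ω * p ω := by
      intro g
      have hg : g = ∑ ω, g ω • (Pi.single ω (1:ℝ) : Ω → ℝ) := by
        funext ω'
        simp [Finset.sum_apply, Pi.single_apply, Finset.sum_ite_eq']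
      conv_lhs => rw [hg]
      rw [map_sum]
      simp [smul_eq_mul, hpdef]
    set S : ℝ := ∑ ω, p ω with hSdef
    have h0A : (0 : Ω → ℝ) ∈ A := ⟨0, fun i => le_refl 0, by funext ω; simp⟩
    have hc0 : c ≤ 0 := by simpa using hAle 0 h0A
    have h1 : ∀ t : ℝ, 0 < t → -(t * S) < c := by
      intro t ht
      have hmem : (fun _ : Ω => -t) ∈ N := fun ω => neg_neg_of_pos ht
      have := hNle _ hmem
      rwa [hF, show ∑ ω, (-t) * p ω = -(t * S) by rw [← Finset.mul_sum, ← hSdef, neg_mul]] at this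
    have hS : 0 < S := by
      have := h1 1 one_pos
      nlinarith
    have hcge : 0 ≤ c := by
      by_contra h'
      push_neg at h'
      have hne : S ≠ 0 := ne_of_gt hS
      have h2 := h1 (-c / (2 * S)) (div_pos (by linarith) (by linarith))
      have e : -(-c / (2 * S) * S) = c / 2 := by field_simp
      rw [e] at h2
      linarith
    have hc : c = 0 := le_antisymm hc0 hcge
    have hp : ∀ ω, 0 ≤ p ω := by
      intro ω
      by_contra h'
      push_neg at h'
      set ε : ℝ := -p ω / (2 * S) with hεdef
      have hne : S ≠ 0 := ne_of_gt hS
      have hε : 0 < ε := div_pos (by linarith) (by linarith)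
      have hmem : (fun ω' : Ω => -ε + -(if ω' = ω then (1:ℝ) else 0)) ∈ N := by
        intro ω'
        by_cases h : ω' = ω <;> simp [h] <;> linarith
      have hval := hNle _ hmem
      rw [hF, hc] at hval
      have hsum : ∑ ω', (-ε + -(if ω' = ω then (1:ℝ) else 0)) * p ω'
          = -ε * S - p ω := by
        rw [hSdef]
        simp only [add_mul, neg_mul, ite_mul, one_mul, zero_mul]
        rw [Finset.sum_add_distrib]
        simp [Finset.sum_ite_eq', Finset.mul_sum, sub_eq_add_neg]
      rw [hsum] at hval
      have e : ε * S = -p ω / 2 := by rw [hεdef]; field_simp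
      linarith
    have hfi : ∀ i, 0 ≤ ∑ ω, f i ω * p ω := by
      intro i
      have hmem : f i ∈ A := by
        refine ⟨fun j => if j = i then 1 else 0, fun j => by by_cases h : j = i <;> simp [h], ?_⟩
        funext ω
        simp [Finset.sum_ite_eq', ite_mul]
      have := hAle _ hmem
      rw [hF, hc] at this
      exact this
    refine ⟨fun ω => p ω / S, fun ω => div_nonneg (hp ω) hS.le, ?_, ?_⟩
    · rw [← Finset.sum_div, ← hSdef, div_self (ne_of_gt hS)]
    · intro i
      rw [show ∑ ω, f i ω * (p ω / S) = (∑ ω, f i ω * p ω) / S by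
        rw [Finset.sum_div]; congr 1; funext ω; ring]
      exact div_nonneg (hfi i) hS.le
  · -- easy direction
    rintro ⟨p, hp, hsum, hfi⟩ lam hlam
    by_contra h'
    push_neg at h'
    have hkey : ∑ ω, (∑ i, lam i * f i ω) * p ω = ∑ i, lam i * ∑ ω, f i ω * p ω := by
      simp_rw [Finset.sum_mul, Finset.mul_sum]
      rw [Finset.sum_comm]
      simp_rw [mul_assoc]
    have hpos : 0 ≤ ∑ ω, (∑ i, lam i * f i ω) * p ω := by
      rw [hkey]
      exact Finset.sum_nonneg fun i _ => mul_nonneg (hlam i) (hfi i)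
    have hω0 : ∃ ω, 0 < p ω := by
      by_contra hno
      push_neg at hno
      have hz : ∑ ω, p ω = 0 := Finset.sum_eq_zero fun ω _ => le_antisymm (hno ω) (hp ω)
      rw [hsum] at hz
      norm_num at hz
    obtain ⟨ω₀, hω₀⟩ := hω0
    have hneg : ∑ ω, (∑ i, lam i * f i ω) * p ω < ∑ ω : Ω, (0:ℝ) := by
      refine Finset.sum_lt_sum (fun ω _ => mul_nonpos_of_nonpos_of_nonneg (h' ω).le (hp ω)) ?_
      exact ⟨ω₀, Finset.mem_univ _, mul_neg_of_neg_of_pos (h' ω₀) hω₀⟩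
    rw [Finset.sum_const, smul_zero] at hneg
    linarith
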